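/- (Theorem 2) Let t be a real number with t ≠ 1. For m ≥ 1 let A_n^{(m)}(t) denote the n-th derivative at x = 0 of the function x ↦ ((1-t)/(e^{x(t-1)} - t))^m, and write A_n(t) = A_n^{(1)}(t). Then for all n, N ∈ ℕ, A_{n+N}(t) = Σ_{i=1}^{N+1} a_{i-1}(N, t) · (1-t)^{N+1-i} · A_n^{(i)}(t). -/

import Mathlib

/-- The coefficients `a i N t` defined by `a 0 N t = 1` and, for `1 ≤ i ≤ N`,
`a i N t = i * t * ∑_{j=0}^{N-i} (i+1)^j * a (i-1) (N-j-1) t`. -/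
noncomputable def eulerianCoeff : ℕ → ℕ → ℝ → ℝ
  | 0, _, _ => 1
  | (i + 1), N, t =>
      ((i : ℝ) + 1) * t *
        ∑ j ∈ Finset.range (N - (i + 1) + 1),
          ((i : ℝ) + 2) ^ j * eulerianCoeff i (N - j - 1) t

/-- `higherEulerian t m n` is the `n`-th Eulerian polynomial of order `m`, evaluated at `t`,
defined as the `n`-th derivative at `x = 0` of `x ↦ ((1-t)/(e^{x(t-1)} - t))^m`. -/
noncomputable def higherEulerian (t : ℝ) (m n : ℕ) : ℝ :=
  iteratedDeriv n (fun x : ℝ => ((1 - t) / (Real.exp (x * (t - 1)) - t)) ^ m) 0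


open Topology Filter Set

lemma iteratedDerivWithin_of_isOpen' {f : ℝ → ℝ} {s : Set ℝ} (hs : IsOpen s) {x : ℝ}
    (hx : x ∈ s) (n : ℕ) : iteratedDerivWithin n f s x = iteratedDeriv n f x := by
  rw [iteratedDerivWithin_eq_iteratedFDerivWithin, iteratedDeriv_eq_iteratedFDeriv,
    iteratedFDerivWithin_of_isOpen n hs hx]

lemma key (t : ℝ) (ht : t ≠ 1) (k n : ℕ) :
    higherEulerian t (k + 1) (n + 1) =
      ((k : ℝ) + 1) * (1 - t) * higherEulerian t (k + 1) n
        + ((k : ℝ) + 1) * t * higherEulerian t (k + 2) n := by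
  set U : Set ℝ := {x | Real.exp (x * (t - 1)) - t ≠ 0} with hUdef
  have hU : IsOpen U := by
    have : Continuous fun x : ℝ => Real.exp (x * (t - 1)) - t := by continuity
    exact isOpen_ne.preimage this
  have h0 : (0 : ℝ) ∈ U := by
    simp [hUdef, sub_ne_zero]
    intro h
    exact ht (by linarith [h.symm])
  have hd : ∀ m : ℕ, ContDiffOn ℝ ⊤ (fun x : ℝ => ((1 - t) / (Real.exp (x * (t - 1)) - t)) ^ m) U := by
    intro m
    apply ContDiffOn.pow
    apply ContDiffOn.div contDiffOn_const
    · exact (((Real.contDiff_exp).comp (contDiff_id.mul contDiff_const)).sub contDiff_const).contDiffOn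
    · exact fun x hx => hx
  have hderiv : ∀ x ∈ U, deriv (fun x : ℝ => ((1 - t) / (Real.exp (x * (t - 1)) - t)) ^ (k+1)) x
      = ((k : ℝ) + 1) * (1 - t) * ((1 - t) / (Real.exp (x * (t - 1)) - t)) ^ (k+1)
        + ((k : ℝ) + 1) * t * ((1 - t) / (Real.exp (x * (t - 1)) - t)) ^ (k+2) := by
    intro x hx
    have hxne : Real.exp (x * (t - 1)) - t ≠ 0 := hx
    have he : HasDerivAt (fun x : ℝ => Real.exp (x * (t - 1)) - t)
        (Real.exp (x * (t - 1)) * (t - 1)) x := by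
      simpa using (((hasDerivAt_id x).mul_const (t - 1)).exp).sub_const t
    have hg : HasDerivAt (fun x : ℝ => (1 - t) / (Real.exp (x * (t - 1)) - t))
        ((0 * (Real.exp (x * (t - 1)) - t) - (1 - t) * (Real.exp (x * (t - 1)) * (t - 1)))
          / (Real.exp (x * (t - 1)) - t) ^ 2) x :=
      (hasDerivAt_const x (1 - t)).div he hxne
    have hF := hg.fun_pow (k + 1)
    rw [hF.deriv]
    have hE : Real.exp (x * (t - 1)) ≠ 0 := Real.exp_ne_zero _
    simp only [Nat.add_sub_cancel]
    rw [pow_add _ k 1, pow_add _ k 2]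
    generalize ((1 - t) / (Real.exp (x * (t - 1)) - t)) ^ k = P
    push_cast
    field_simp
    ring
  have ev : deriv (fun x : ℝ => ((1 - t) / (Real.exp (x * (t - 1)) - t)) ^ (k+1))
      =ᶠ[𝓝 (0:ℝ)] fun x => ((k : ℝ) + 1) * (1 - t) * ((1 - t) / (Real.exp (x * (t - 1)) - t)) ^ (k+1)
        + ((k : ℝ) + 1) * t * ((1 - t) / (Real.exp (x * (t - 1)) - t)) ^ (k+2) := by
    filter_upwards [hU.mem_nhds h0] with x hx using hderiv x hx
  have hud : UniqueDiffOn ℝ U := hU.uniqueDiffOn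
  calc higherEulerian t (k + 1) (n + 1)
      = iteratedDeriv n (deriv (fun x : ℝ => ((1 - t) / (Real.exp (x * (t - 1)) - t)) ^ (k+1))) 0 := by
        rw [higherEulerian, iteratedDeriv_succ']
    _ = iteratedDeriv n (fun x => ((k : ℝ) + 1) * (1 - t) * ((1 - t) / (Real.exp (x * (t - 1)) - t)) ^ (k+1)
        + ((k : ℝ) + 1) * t * ((1 - t) / (Real.exp (x * (t - 1)) - t)) ^ (k+2)) 0 :=
        ev.iteratedDeriv_eq n
    _ = iteratedDerivWithin n ((fun x => ((k : ℝ) + 1) * (1 - t) * ((1 - t) / (Real.exp (x * (t - 1)) - t)) ^ (k+1))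
        + fun x => ((k : ℝ) + 1) * t * ((1 - t) / (Real.exp (x * (t - 1)) - t)) ^ (k+2)) U 0 :=
        (iteratedDerivWithin_of_isOpen' hU h0 n).symm
    _ = ((k : ℝ) + 1) * (1 - t) * higherEulerian t (k + 1) n
        + ((k : ℝ) + 1) * t * higherEulerian t (k + 2) n := by
        rw [iteratedDerivWithin_add h0 hud
          (((contDiffOn_const.mul (hd (k+1))).of_le le_top).contDiffWithinAt h0)
          (((contDiffOn_const.mul (hd (k+2))).of_le le_top).contDiffWithinAt h0),
          iteratedDerivWithin_const_mul h0 hud _ (((hd (k+1)).of_le le_top).contDiffWithinAt h0),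
          iteratedDerivWithin_const_mul h0 hud _ (((hd (k+2)).of_le le_top).contDiffWithinAt h0),
          iteratedDerivWithin_of_isOpen' hU h0, iteratedDerivWithin_of_isOpen' hU h0,
          higherEulerian, higherEulerian]

lemma coeff_top (N : ℕ) (t : ℝ) :
    eulerianCoeff (N + 1) (N + 1) t = ((N : ℝ) + 1) * t * eulerianCoeff N N t := by
  rw [eulerianCoeff]
  simp

lemma coeff_rec (k N : ℕ) (t : ℝ) (h : k ≤ N) :
    eulerianCoeff k (N + 1) t
      = ((k : ℝ) + 1) * eulerianCoeff k N t + (k : ℝ) * t * eulerianCoeff (k - 1) N t := by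
  cases k with
  | zero => simp [eulerianCoeff]
  | succ j =>
    have h1 : N + 1 - (j + 1) + 1 = (N - j) + 1 := by omega
    have h2 : N - (j + 1) + 1 = N - j := by omega
    rw [eulerianCoeff, eulerianCoeff, h1, h2, Finset.sum_range_succ']
    have h3 : ∀ l : ℕ, N + 1 - (l + 1) - 1 = N - l - 1 - 0 := fun l => by omega
    push_cast
    simp only [Nat.succ_sub_succ, pow_zero, one_mul, Nat.add_sub_cancel, Nat.sub_zero]
    rw [mul_add, Finset.mul_sum, Finset.mul_sum, Finset.mul_sum]
    congr 1
    apply Finset.sum_congr rfl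
    intro l _
    ring

lemma main_ind (t : ℝ) (ht : t ≠ 1) :
    ∀ N n : ℕ, higherEulerian t 1 (n + N) =
      ∑ k ∈ Finset.range (N + 1),
        eulerianCoeff k N t * (1 - t) ^ (N - k) * higherEulerian t (k + 1) n := by
  intro N
  induction N with
  | zero => intro n; simp [eulerianCoeff]
  | succ N IH =>
    intro n
    have hL : n + (N + 1) = (n + 1) + N := by omega
    rw [hL, IH (n + 1)]
    have step : ∀ k ∈ Finset.range (N + 1),
        eulerianCoeff k N t * (1 - t) ^ (N - k) * higherEulerian t (k + 1) (n + 1)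
          = ((k : ℝ) + 1) * eulerianCoeff k N t * (1 - t) ^ (N + 1 - k) * higherEulerian t (k + 1) n
            + ((k : ℝ) + 1) * t * eulerianCoeff k N t * (1 - t) ^ (N - k) * higherEulerian t (k + 2) n := by
      intro k hk
      rw [key t ht k n]
      have hp : (1 - t) ^ (N + 1 - k) = (1 - t) ^ (N - k) * (1 - t) := by
        rw [← pow_succ]
        congr 1
        have := Nat.lt_succ_iff.mp (Finset.mem_range.mp hk)
        omega
      rw [hp]; ring
    rw [Finset.sum_congr rfl step, Finset.sum_add_distrib]
    set f : ℕ → ℝ := fun k =>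
      (k : ℝ) * t * eulerianCoeff (k - 1) N t * (1 - t) ^ (N + 1 - k) * higherEulerian t (k + 1) n
      with hf
    have h1 : ∑ k ∈ Finset.range (N + 2),
        eulerianCoeff k (N + 1) t * (1 - t) ^ (N + 1 - k) * higherEulerian t (k + 1) n
        = (∑ k ∈ Finset.range (N + 1),
            ((k : ℝ) + 1) * eulerianCoeff k N t * (1 - t) ^ (N + 1 - k) * higherEulerian t (k + 1) n)
          + ∑ k ∈ Finset.range (N + 2), f k := by
      rw [Finset.sum_range_succ, Finset.sum_range_succ f]
      have h11 : ∑ k ∈ Finset.range (N + 1),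
          eulerianCoeff k (N + 1) t * (1 - t) ^ (N + 1 - k) * higherEulerian t (k + 1) n
          = ∑ k ∈ Finset.range (N + 1),
            (((k : ℝ) + 1) * eulerianCoeff k N t * (1 - t) ^ (N + 1 - k) * higherEulerian t (k + 1) n
              + f k) := by
        apply Finset.sum_congr rfl
        intro k hk
        rw [coeff_rec k N t (Nat.lt_succ_iff.mp (Finset.mem_range.mp hk)), hf]
        ring
      rw [h11, Finset.sum_add_distrib]
      have htop : eulerianCoeff (N + 1) (N + 1) t * (1 - t) ^ (N + 1 - (N + 1)) * higherEulerian t (N + 1 + 1) n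
          = f (N + 1) := by
        rw [coeff_top, hf]
        push_cast
        simp
      rw [htop]
      ring
    rw [h1]

    have h2 : ∑ k ∈ Finset.range (N + 2), f k
        = ∑ k ∈ Finset.range (N + 1),
          ((k : ℝ) + 1) * t * eulerianCoeff k N t * (1 - t) ^ (N - k) * higherEulerian t (k + 2) n := by
      rw [Finset.sum_range_succ' f]
      have hf0 : f 0 = 0 := by simp [hf]
      rw [hf0, add_zero]
      apply Finset.sum_congr rfl
      intro k hk
      rw [hf]
      push_cast
      simp only [Nat.add_sub_cancel, Nat.succ_sub_succ]
    rw [h2]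

theorem eulerian_higher_order_identity (t : ℝ) (ht : t ≠ 1) (n N : ℕ) :
    higherEulerian t 1 (n + N) =
      ∑ i ∈ Finset.Icc 1 (N + 1),
        eulerianCoeff (i - 1) N t * (1 - t) ^ (N + 1 - i) * higherEulerian t i n := by
  rw [main_ind t ht N n, ← Finset.Ico_add_one_right_eq_Icc, Finset.sum_Ico_eq_sum_range]
  have hr : N + 1 + 1 - 1 = N + 1 := by omega
  rw [hr]
  apply Finset.sum_congr rfl
  intro k hk
  have e1 : 1 + k - 1 = k := by omega
  have e2 : N + 1 - (1 + k) = N - k := by omega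
  have e3 : 1 + k = k + 1 := by omega
  rw [e1, e2, e3]
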